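/- Let G be a graph with disjoint vertex sets A, C, D such that every vertex of A is adjacent to every vertex of D, and |C| ≤ k-1. If H is a k-connected subgraph of G induced inside C ∪ D with |V(H)| ≥ 2k-1, then the subgraph of G induced by A ∪ V(H) is also k-connected, provided A is nonempty. -/

import Mathlib

/-- A finite set `S` of vertices induces a `k`-connected subgraph of `G`:
it has more than `k` vertices and removing any set of fewer than `k`
vertices leaves the induced graph connected. -/
def KConnOn {V : Type*} [Fintype V] [DecidableEq V]
    (G : SimpleGraph V) (k : ℕ) (S : Finset V) : Prop :=
  k < S.card ∧ ∀ T : Finset V, T.card < k →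
    (G.induce ((S : Set V) \ (T : Set V))).Connected

private lemma star_connected {V : Type*} (G : SimpleGraph V) (s : Set V) (d : V)
    (hd : d ∈ s) (h : ∀ a ∈ s, a ≠ d → G.Adj a d) : (G.induce s).Connected := by
  rw [SimpleGraph.connected_iff]
  refine ⟨?_, ⟨⟨d, hd⟩⟩⟩
  have key : ∀ u : s, (G.induce s).Reachable u ⟨d, hd⟩ := by
    rintro ⟨u, hu⟩
    by_cases h' : u = d
    · subst h'; exact SimpleGraph.Reachable.refl _
    · exact SimpleGraph.Adj.reachable (by simpa using h u hu h')
  intro u v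
  exact (key u).trans (key v).symm

/-- If `[A, D]` is complete in `G`, `|C| ≤ k - 1`, and `H = G(S)` is a
`k`-connected subgraph inside `C ∪ D` with `|S| ≥ 2k - 1`, then the
subgraph induced by `A ∪ S` is `k`-connected (for `A` nonempty). -/
theorem stmt_9 {V : Type*} [Fintype V] [DecidableEq V]
    (G : SimpleGraph V) (k : ℕ) (hk : 0 < k) (A C D : Finset V)
    (hAC : Disjoint A C) (hAD : Disjoint A D) (hCD : Disjoint C D)
    (hcomp : ∀ a ∈ A, ∀ d ∈ D, G.Adj a d)
    (hC : C.card ≤ k - 1)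
    (S : Finset V) (hS : S ⊆ C ∪ D)
    (hconn : KConnOn G k S) (hcard : 2 * k - 1 ≤ S.card)
    (hAne : A.Nonempty) :
    KConnOn G k (A ∪ S) := by
  have hAS : Disjoint A S := by
    refine Finset.disjoint_left.mpr fun a ha haS => ?_
    rcases Finset.mem_union.mp (hS haS) with h | h
    · exact Finset.disjoint_left.mp hAC ha h
    · exact Finset.disjoint_left.mp hAD ha h
  constructor
  · have : (A ∪ S).card = A.card + S.card := Finset.card_union_of_disjoint hAS
    have hA1 : 1 ≤ A.card := Finset.card_pos.mpr hAne
    omega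
  · intro T hT
    -- find d0 ∈ (S ∩ D) \ T
    have hSD : S.card - (k-1) ≤ (S ∩ D).card := by
      have h1 : S \ D ⊆ C := by
        intro x hx
        rw [Finset.mem_sdiff] at hx
        rcases Finset.mem_union.mp (hS hx.1) with h | h
        · exact h
        · exact absurd h hx.2
      have h2 : (S \ D).card ≤ k - 1 := le_trans (Finset.card_le_card h1) hC
      have h3 : (S ∩ D).card + (S \ D).card = S.card := by
        rw [Finset.card_inter_add_card_sdiff]
      omega
    have hex : ((S ∩ D) \ T).Nonempty := by
      rw [← Finset.card_pos]
      have := Finset.le_card_sdiff T (S ∩ D)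
      omega
    obtain ⟨d0, hd0⟩ := hex
    rw [Finset.mem_sdiff, Finset.mem_inter] at hd0
    obtain ⟨⟨hd0S, hd0D⟩, hd0T⟩ := hd0
    have hset : ((↑(A ∪ S) : Set V) \ (T : Set V))
        = ((S : Set V) \ (T : Set V)) ∪ (((A : Set V) \ (T : Set V)) ∪ {d0}) := by
      ext x
      simp only [Finset.coe_union, Set.mem_diff, Set.mem_union, Set.mem_singleton_iff]
      constructor
      · rintro ⟨hx, hxT⟩
        rcases hx with hx | hx
        · exact Or.inr (Or.inl ⟨hx, hxT⟩)
        · exact Or.inl ⟨hx, hxT⟩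
      · rintro (⟨hx, hxT⟩ | ⟨hx, hxT⟩ | rfl)
        · exact ⟨Or.inr hx, hxT⟩
        · exact ⟨Or.inl hx, hxT⟩
        · exact ⟨Or.inr hd0S, hd0T⟩
    rw [hset]
    apply SimpleGraph.induce_union_connected
    · exact (hconn.2 T hT).preconnected
    · refine (star_connected G (((A : Set V) \ (T : Set V)) ∪ {d0}) d0 (Or.inr rfl) ?_).preconnected
      rintro a (⟨haA, haT⟩ | rfl) hne
      · exact hcomp a haA d0 hd0D
      · exact absurd rfl hne
    · exact ⟨d0, ⟨hd0S, hd0T⟩, Or.inr rfl⟩
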